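/- A finite commutative ring R with identity is a chain ring (its ideals are linearly ordered by inclusion) if and only if R is a local ring whose maximal ideal is principal. -/
import Mathlib


/-- a finite commutative ring `R` with `1 ≠ 0` is a chain ring (its ideals are
linearly ordered by inclusion) iff `R` is a local ring (it has a unique maximal ideal) whose
maximal ideal is principal. -/
theorem stmt5 {R : Type*} [CommRing R] [Fintype R] [Nontrivial R] :
    (∀ I J : Ideal R, I ≤ J ∨ J ≤ I) ↔
      ∃ M : Ideal R, M.IsMaximal ∧ (∀ I : Ideal R, I.IsMaximal → I = M) ∧
        Submodule.IsPrincipal M := by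
  constructor
  · intro h
    obtain ⟨M, hM⟩ := Ideal.exists_maximal R
    refine ⟨M, hM, fun I hI => ?_, ?_⟩
    · rcases h I M with h' | h'
      · exact hI.eq_of_le hM.ne_top h'
      · exact (hM.eq_of_le hI.ne_top h').symm
    · classical
      have key : ∀ s : Finset R, Submodule.IsPrincipal (Ideal.span (s : Set R)) := by
        intro s
        induction s using Finset.induction_on with
        | empty =>
          refine ⟨⟨0, ?_⟩⟩
          rw [Finset.coe_empty, Ideal.span_empty]
          exact Ideal.span_zero.symm
        | @insert a s ha ih =>
          obtain ⟨b, hb⟩ := ih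
          rw [Finset.coe_insert, Ideal.span_insert, hb]
          rcases h (Ideal.span {a}) (Submodule.span R {b}) with h' | h'
          · exact ⟨⟨b, sup_eq_right.mpr h'⟩⟩
          · exact ⟨⟨a, sup_eq_left.mpr h'⟩⟩
      have hMeq : M = Ideal.span (((Set.toFinite (M : Set R)).toFinset : Finset R) : Set R) := by
        rw [Set.Finite.coe_toFinset, Ideal.span_eq]
      rw [hMeq]; exact key _
  · rintro ⟨M, hM, huniq, ⟨m, hm⟩⟩
    have hmem : m ∈ M := hm ▸ Submodule.mem_span_singleton_self m
    have hunit : ∀ c : R, c ∉ M → ∃ u : R, u * c = 1 := by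
      intro c hc
      by_cases hne : Ideal.span {c} = ⊤
      · have : (1 : R) ∈ Ideal.span {c} := hne ▸ Submodule.mem_top
        exact Ideal.mem_span_singleton'.mp this
      · obtain ⟨M', hM', hle⟩ := Ideal.exists_le_maximal _ hne
        rw [huniq M' hM'] at hle
        exact absurd (hle (Ideal.subset_span rfl)) hc
    -- m is nilpotent
    have hnil : ∃ n, m ^ n = 0 := by
      obtain ⟨i, j, hij, he⟩ := Finite.exists_ne_map_eq_of_infinite (fun n : ℕ => m ^ n)
      wlog hlt : i < j generalizing i j
      · exact this j i hij.symm he.symm (by omega)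
      have h1 : m ^ i * (1 - m ^ (j - i)) = 0 := by
        have : m ^ i * m ^ (j - i) = m ^ j := by rw [← pow_add]; congr 1; omega
        simp only [mul_sub, mul_one, this]
        rw [he]; ring
      have hnm : (1 : R) - m ^ (j - i) ∉ M := by
        intro hmm
        have hpow : m ^ (j - i) ∈ M := by
          have : j - i ≠ 0 := by omega
          obtain ⟨t, ht⟩ := Nat.exists_eq_succ_of_ne_zero this
          rw [ht, pow_succ]
          exact Ideal.mul_mem_left M _ hmem
        have : (1 : R) ∈ M := by
          have := M.add_mem hmm hpow
          simpa using this
        exact hM.ne_top (Ideal.eq_top_of_isUnit_mem M this isUnit_one)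
      obtain ⟨u, hu⟩ := hunit _ hnm
      refine ⟨i, ?_⟩
      calc m ^ i = m ^ i * (u * (1 - m ^ (j - i))) := by rw [hu, mul_one]
        _ = u * (m ^ i * (1 - m ^ (j - i))) := by ring
        _ = 0 := by rw [h1, mul_zero]
    obtain ⟨n, hn⟩ := hnil
    -- every nonzero element generates span {m ^ k} for some k
    have key : ∀ x : R, x ≠ 0 → ∃ k, Ideal.span {x} = Ideal.span {m ^ k} := by
      intro x hx
      have hP : ∃ k, x ∉ Ideal.span {m ^ k} := by
        refine ⟨n, ?_⟩
        rw [hn, Ideal.span_singleton_eq_bot.mpr rfl]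
        simpa using hx
      classical
      have hknot := Nat.find_spec hP
      have hk0 : Nat.find hP ≠ 0 := by
        intro h0
        apply hknot
        rw [h0]
        simp [Ideal.span_singleton_one]
      obtain ⟨k', hkeq⟩ := Nat.exists_eq_succ_of_ne_zero hk0
      rw [hkeq] at hknot
      have hkin : x ∈ Ideal.span {m ^ k'} := by
        by_contra hcon
        have := Nat.find_min' hP hcon
        omega
      obtain ⟨c, hc⟩ := Ideal.mem_span_singleton'.mp hkin
      have hcM : c ∉ M := by
        intro hcM
        apply hknot
        rw [hm, Submodule.mem_span_singleton] at hcM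
        obtain ⟨d, hd⟩ := hcM
        refine Ideal.mem_span_singleton'.mpr ⟨d, ?_⟩
        rw [← hc, ← hd, pow_succ, smul_eq_mul]
        ring
      obtain ⟨u, hu⟩ := hunit _ hcM
      refine ⟨k', le_antisymm ?_ ?_⟩
      · rw [Ideal.span_singleton_le_span_singleton]
        exact ⟨c, by rw [← hc]; ring⟩
      · rw [Ideal.span_singleton_le_span_singleton]
        refine ⟨u, ?_⟩
        rw [← hc]
        calc m ^ k' = (u * c) * m ^ k' := by rw [hu, one_mul]
          _ = c * m ^ k' * u := by ring
    intro I J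
    by_contra hcon
    push_neg at hcon
    obtain ⟨hIJ, hJI⟩ := hcon
    obtain ⟨x, hxI, hxJ⟩ := SetLike.not_le_iff_exists.mp hIJ
    obtain ⟨y, hyJ, hyI⟩ := SetLike.not_le_iff_exists.mp hJI
    have hx0 : x ≠ 0 := fun h => hxJ (h ▸ J.zero_mem)
    have hy0 : y ≠ 0 := fun h => hyI (h ▸ I.zero_mem)
    obtain ⟨k, hkx⟩ := key x hx0
    obtain ⟨l, hly⟩ := key y hy0
    have hmkJ : m ^ k ∉ J := by
      intro hmk
      apply hxJ
      have : Ideal.span {x} ≤ J := by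
        rw [hkx, Ideal.span_le]
        simpa using hmk
      exact this (Ideal.subset_span rfl)
    have hmlJ : m ^ l ∈ J := by
      have : Ideal.span {m ^ l} ≤ J := by
        rw [← hly, Ideal.span_le]
        simpa using hyJ
      exact this (Ideal.subset_span rfl)
    rcases le_or_gt l k with hle | hlt
    · apply hmkJ
      have : m ^ k = m ^ l * m ^ (k - l) := by rw [← pow_add]; congr 1; omega
      rw [this]
      exact Ideal.mul_mem_right _ _ hmlJ
    · apply hyI
      have h1 : Ideal.span {y} ≤ Ideal.span {m ^ k} := by
        rw [hly, Ideal.span_singleton_le_span_singleton]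
        exact pow_dvd_pow m hlt.le
      have h2 : Ideal.span {m ^ k} ≤ I := by
        rw [← hkx, Ideal.span_le]
        simpa using hxI
      exact (h1.trans h2) (Ideal.subset_span rfl)
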